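/- Let i, j be positive integers with gcd(i, j) = 1. The set of points (a, b) ∈ ℝ² satisfying T_i(b) − T_j(a) = 0, T_j′(a) = 0, and T_i′(b) = 0 is exactly the set S = { (cos(λπ/j), cos(μπ/i)) : 1 ≤ λ ≤ j−1, 1 ≤ μ ≤ i−1, λ ≡ μ (mod 2) }, and S has exactly (i−1)(j−1)/2 elements. -/

import Mathlib

open Polynomial Polynomial.Chebyshev Real

lemma U_eval_one (n : ℕ) : (U ℝ (n:ℤ)).eval 1 = n + 1 := by
  induction n using Nat.twoStepInduction with
  | zero => simp [U_zero]
  | one => norm_num [U_one]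
  | more n ih1 ih2 =>
    push_cast
    rw [show ((n:ℤ) + 2) = (n:ℤ) + 2 by ring, U_add_two]
    push_cast at ih1 ih2
    simp only [eval_sub, eval_mul, eval_ofNat, eval_X]
    rw [ih1, ih2]
    ring

lemma U_natDegree_le (n : ℕ) : (U ℝ (n:ℤ)).natDegree ≤ n := by
  induction n using Nat.twoStepInduction with
  | zero => simp [U_zero]
  | one =>
    rw [show ((1:ℕ):ℤ) = 1 by simp, U_one]
    apply le_trans (natDegree_mul_le)
    simp
  | more n ih1 ih2 =>
    push_cast at ih1 ih2 ⊢
    rw [U_add_two]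
    apply le_trans (natDegree_sub_le _ _)
    apply max_le
    · apply le_trans (natDegree_mul_le)
      have : ((2:ℝ[X]) * X).natDegree ≤ 1 := by
        apply le_trans (natDegree_mul_le); simp
      omega
    · omega

lemma arg_mem (n : ℕ) (hn : 0 < n) {m : ℕ} (hm : m ≤ n - 1) :
    (m:ℝ) * π / n ∈ Set.Icc 0 π := by
  constructor
  · positivity
  · rw [div_le_iff₀ (by positivity)]
    have : (m:ℝ) ≤ n := by exact_mod_cast (by omega : m ≤ n)
    nlinarith [Real.pi_pos]

lemma cos_div_inj (n : ℕ) (hn : 0 < n) {k l : ℕ} (hk : k ≤ n - 1) (hl : l ≤ n - 1)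
    (h : Real.cos (k * π / n) = Real.cos (l * π / n)) : k = l := by
  have h1 := Real.injOn_cos (arg_mem n hn hk) (arg_mem n hn hl) h
  have hπ := Real.pi_pos
  have hn' : (n:ℝ) ≠ 0 := by positivity
  field_simp at h1
  exact_mod_cast h1

lemma deriv_T_root (n k : ℕ) (hn : 0 < n) (hk1 : 1 ≤ k) (hk2 : k ≤ n - 1) :
    (Polynomial.derivative (T ℝ (n:ℤ))).eval (Real.cos ((k:ℝ) * π / n)) = 0 := by
  rw [T_derivative_eq_U]
  simp only [eval_mul, eval_intCast]
  have hs : Real.sin ((k:ℝ) * π / n) ≠ 0 := by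
    apply ne_of_gt
    apply Real.sin_pos_of_pos_of_lt_pi
    · positivity
    · rw [div_lt_iff₀ (by positivity)]
      have : (k:ℝ) < n := by exact_mod_cast (by omega : k < n)
      nlinarith [Real.pi_pos]
  have h := Polynomial.Chebyshev.U_real_cos ((k:ℝ) * π / n) ((n:ℤ) - 1)
  have hn' : (n:ℝ) ≠ 0 := by positivity
  push_cast at h
  have h2 : ((n:ℝ) - 1 + 1) = (n:ℝ) := by ring
  have hval : ((n:ℝ)) * ((k:ℝ) * π / n) = (k:ℝ) * π := by field_simp
  rw [h2, hval, Real.sin_nat_mul_pi] at h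
  have h3 := (mul_eq_zero.mp h).resolve_right hs
  rw [h3, mul_zero]

lemma deriv_T_root_exists (n : ℕ) (hn : 0 < n) (a : ℝ)
    (h : (Polynomial.derivative (T ℝ (n:ℤ))).eval a = 0) :
    ∃ k : ℕ, 1 ≤ k ∧ k ≤ n - 1 ∧ a = Real.cos ((k:ℝ) * π / n) := by
  rcases Nat.lt_or_ge n 2 with hn2 | hn2
  · -- n = 1
    interval_cases n
    rw [T_derivative_eq_U] at h
    norm_num [U_zero] at h
  · set f := Polynomial.derivative (T ℝ (n:ℤ)) with hf
    have hidx : (n:ℤ) - 1 = ((n-1 : ℕ) : ℤ) := by omega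
    have hfe : f.eval 1 = (n:ℝ) * (n:ℝ) := by
      rw [hf, T_derivative_eq_U, eval_mul, eval_intCast, hidx, _root_.U_eval_one]
      have : ((n-1:ℕ):ℝ) = (n:ℝ) - 1 := by
        push_cast [Nat.cast_sub hn]; ring
      rw [this]; push_cast; ring
    have hf0 : f ≠ 0 := by
      intro h0
      rw [h0, eval_zero] at hfe
      have : (n:ℝ) ≠ 0 := by positivity
      exact this (by nlinarith [hfe])
    have hdeg : f.natDegree ≤ n - 1 := by
      rw [hf, T_derivative_eq_U]
      refine le_trans (natDegree_mul_le) ?_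
      rw [hidx]
      simpa using U_natDegree_le (n-1)
    set F : Finset ℝ := (Finset.Icc 1 (n-1)).image (fun k : ℕ => Real.cos ((k:ℝ) * π / n)) with hF
    have hFcard : F.card = n - 1 := by
      rw [hF, Finset.card_image_of_injOn, Nat.card_Icc]
      · omega
      · intro k hk l hl hkl
        simp only [Finset.coe_Icc, Set.mem_Icc] at hk hl
        exact cos_div_inj n hn hk.2 hl.2 hkl
    have hsub : F ⊆ f.roots.toFinset := by
      intro x hx
      rw [hF, Finset.mem_image] at hx
      obtain ⟨k, hk, rfl⟩ := hx
      rw [Finset.mem_Icc] at hk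
      rw [Multiset.mem_toFinset, Polynomial.mem_roots hf0]
      exact deriv_T_root n k hn hk.1 hk.2
    have hcard : f.roots.toFinset.card ≤ F.card := by
      calc f.roots.toFinset.card ≤ Multiset.card f.roots := Multiset.toFinset_card_le _
        _ ≤ f.natDegree := Polynomial.card_roots' f
        _ ≤ n - 1 := hdeg
        _ = F.card := hFcard.symm
    have hEq : F = f.roots.toFinset := Finset.eq_of_subset_of_card_le hsub hcard
    have ha : a ∈ f.roots.toFinset := by
      rw [Multiset.mem_toFinset, Polynomial.mem_roots hf0]
      exact h
    rw [← hEq, hF, Finset.mem_image] at ha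
    obtain ⟨k, hk, hak⟩ := ha
    rw [Finset.mem_Icc] at hk
    exact ⟨k, hk.1, hk.2, hak.symm⟩

lemma card_parity (r : ℕ) (hr : r < 2) (n : ℕ) :
    ((Finset.Icc 1 n).filter (fun x => x % 2 = r)).card = (n + r) / 2 := by
  induction n with
  | zero => simp; omega
  | succ n ih =>
    have hins : Finset.Icc 1 (n+1) = insert (n+1) (Finset.Icc 1 n) := by
      ext x; simp [Finset.mem_Icc]; omega
    rw [hins, Finset.filter_insert]
    by_cases hpar : (n+1) % 2 = r
    · rw [if_pos hpar, Finset.card_insert_of_notMem (by simp [Finset.mem_Icc])]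
      omega
    · rw [if_neg hpar]; omega

lemma count_arith (i j : ℕ) (hi : 0 < i) (hj : 0 < j) (hpar : i % 2 = 1 ∨ j % 2 = 1) :
    (j-1+0)/2 * ((i-1+0)/2) + (j-1+1)/2 * ((i-1+1)/2) = (i-1)*(j-1)/2 := by
  rcases hpar with hp | hp
  · obtain ⟨m, rfl⟩ : ∃ m, i = 2*m+1 := ⟨i/2, by omega⟩
    have e1 : (2*m+1-1+0)/2 = m := by omega
    have e2 : (2*m+1-1+1)/2 = m := by omega
    rw [e1, e2]
    have e3 : (2*m+1-1) * (j-1) = 2 * (m * (j-1)) := by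
      rw [show 2*m+1-1 = 2*m by omega]; ring
    rw [e3, Nat.mul_div_cancel_left _ (by norm_num : 0 < 2)]
    have h4 : (j-1+0)/2 + (j-1+1)/2 = j - 1 := by omega
    calc (j-1+0)/2 * m + (j-1+1)/2 * m = ((j-1+0)/2 + (j-1+1)/2) * m := by ring
      _ = (j-1) * m := by rw [h4]
      _ = m * (j-1) := Nat.mul_comm _ _
  · obtain ⟨m, rfl⟩ : ∃ m, j = 2*m+1 := ⟨j/2, by omega⟩
    have e1 : (2*m+1-1+0)/2 = m := by omega
    have e2 : (2*m+1-1+1)/2 = m := by omega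
    rw [e1, e2]
    have e3 : (i-1) * (2*m+1-1) = 2 * (m * (i-1)) := by
      rw [show 2*m+1-1 = 2*m by omega]; ring
    rw [e3, Nat.mul_div_cancel_left _ (by norm_num : 0 < 2)]
    have h4 : (i-1+0)/2 + (i-1+1)/2 = i - 1 := by omega
    calc m * ((i-1+0)/2) + m * ((i-1+1)/2) = m * ((i-1+0)/2 + (i-1+1)/2) := by ring
      _ = m * (i-1) := by rw [h4]

lemma neg_one_pow_iff_mod (a b : ℕ) : ((-1:ℝ))^a = (-1)^b ↔ a % 2 = b % 2 := by
  constructor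
  · intro h
    rcases Nat.even_or_odd a with ha | ha <;> rcases Nat.even_or_odd b with hb | hb
    · rw [Nat.even_iff] at ha hb; omega
    · rw [ha.neg_one_pow, hb.neg_one_pow] at h; norm_num at h
    · rw [ha.neg_one_pow, hb.neg_one_pow] at h; norm_num at h
    · rw [Nat.odd_iff] at ha hb; omega
  · intro h
    rcases Nat.even_or_odd a with ha | ha
    · have hb : Even b := by rw [Nat.even_iff] at ha ⊢; omega
      rw [ha.neg_one_pow, hb.neg_one_pow]
    · have hb : Odd b := by rw [Nat.odd_iff] at ha ⊢; omega
      rw [ha.neg_one_pow, hb.neg_one_pow]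

lemma T_eval_cos_val (n k : ℕ) (hn : 0 < n) :
    (T ℝ (n:ℤ)).eval (Real.cos ((k:ℝ) * π / n)) = (-1:ℝ)^k := by
  rw [T_real_cos]
  have hn' : (n:ℝ) ≠ 0 := by positivity
  have h1 : (((n:ℤ)):ℝ) * ((k:ℝ)*π/n) = (k:ℝ)*π := by push_cast; field_simp
  rw [h1]
  simpa using Real.cos_nat_mul_pi_sub 0 k

theorem chebyshev_curve_singular_points (i j : ℕ) (hi : 0 < i) (hj : 0 < j)
    (hgcd : Nat.gcd i j = 1)
    (S : Set (ℝ × ℝ))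
    (hS : S = {p : ℝ × ℝ | ∃ lam mu : ℕ, 1 ≤ lam ∧ lam ≤ j - 1 ∧ 1 ≤ mu ∧ mu ≤ i - 1 ∧
        lam % 2 = mu % 2 ∧ p = (Real.cos ((lam : ℝ) * π / j), Real.cos ((mu : ℝ) * π / i))}) :
    {p : ℝ × ℝ | (T ℝ i).eval p.2 - (T ℝ j).eval p.1 = 0 ∧
        (Polynomial.derivative (T ℝ j)).eval p.1 = 0 ∧
        (Polynomial.derivative (T ℝ i)).eval p.2 = 0} = S ∧
    S.ncard = (i - 1) * (j - 1) / 2 := by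
  subst hS
  constructor
  · ext ⟨a, b⟩
    simp only [Set.mem_setOf_eq]
    constructor
    · rintro ⟨heq, hda, hdb⟩
      obtain ⟨lam, hl1, hl2, hal⟩ := deriv_T_root_exists j hj a hda
      obtain ⟨mu, hm1, hm2, hbm⟩ := deriv_T_root_exists i hi b hdb
      refine ⟨lam, mu, hl1, hl2, hm1, hm2, ?_, by rw [hal, hbm]⟩
      rw [hal, hbm, T_eval_cos_val i mu hi, T_eval_cos_val j lam hj] at heq
      rw [← neg_one_pow_iff_mod]
      linarith [heq]
    · rintro ⟨lam, mu, hl1, hl2, hm1, hm2, hpar, hp⟩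
      rw [Prod.ext_iff] at hp
      obtain ⟨ha, hb⟩ := hp
      simp only at ha hb
      refine ⟨?_, ?_, ?_⟩
      · rw [ha, hb, T_eval_cos_val i mu hi, T_eval_cos_val j lam hj,
          (neg_one_pow_iff_mod mu lam).mpr hpar.symm, sub_self]
      · rw [ha]; exact deriv_T_root j lam hj hl1 hl2
      · rw [hb]; exact deriv_T_root i mu hi hm1 hm2
  · set g : ℕ × ℕ → ℝ × ℝ :=
      fun q => (Real.cos ((q.1:ℝ) * π / j), Real.cos ((q.2:ℝ) * π / i)) with hg
    set P : Finset (ℕ × ℕ) :=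
      (Finset.Icc 1 (j-1) ×ˢ Finset.Icc 1 (i-1)).filter (fun q => q.1 % 2 = q.2 % 2) with hP
    have hset : {p : ℝ × ℝ | ∃ lam mu : ℕ, 1 ≤ lam ∧ lam ≤ j - 1 ∧ 1 ≤ mu ∧ mu ≤ i - 1 ∧
        lam % 2 = mu % 2 ∧ p = (Real.cos ((lam : ℝ) * π / j), Real.cos ((mu : ℝ) * π / i))}
        = ↑(P.image g) := by
      ext p
      simp only [Set.mem_setOf_eq, Finset.coe_image, Set.mem_image, Finset.mem_coe,
        hP, Finset.mem_filter, Finset.mem_product, Finset.mem_Icc, hg]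
      constructor
      · rintro ⟨l, m, h1, h2, h3, h4, h5, rfl⟩
        exact ⟨(l, m), ⟨⟨⟨h1, h2⟩, h3, h4⟩, h5⟩, rfl⟩
      · rintro ⟨⟨l, m⟩, ⟨⟨⟨h1, h2⟩, h3, h4⟩, h5⟩, rfl⟩
        exact ⟨l, m, h1, h2, h3, h4, h5, rfl⟩
    rw [hset, Set.ncard_coe_finset]
    have hinj : Set.InjOn g ↑P := by
      rintro ⟨l, m⟩ h ⟨l', m'⟩ h' he
      simp only [Finset.coe_filter, Set.mem_setOf_eq, Finset.mem_product, Finset.mem_Icc,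
        hP] at h h'
      have h1 := congrArg Prod.fst he
      have h2 := congrArg Prod.snd he
      simp only [hg] at h1 h2
      have e1 := cos_div_inj j hj h.1.1.2 h'.1.1.2 h1
      have e2 := cos_div_inj i hi h.1.2.2 h'.1.2.2 h2
      simp [e1, e2]
    rw [Finset.card_image_of_injOn hinj]
    have hparity : i % 2 = 1 ∨ j % 2 = 1 := by
      by_contra hcon
      push_neg at hcon
      have : 2 ∣ Nat.gcd i j := Nat.dvd_gcd (by omega) (by omega)
      omega
    have hunion : P = (((Finset.Icc 1 (j-1)).filter (fun x => x % 2 = 0)) ×ˢ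
          ((Finset.Icc 1 (i-1)).filter (fun x => x % 2 = 0))) ∪
        (((Finset.Icc 1 (j-1)).filter (fun x => x % 2 = 1)) ×ˢ
          ((Finset.Icc 1 (i-1)).filter (fun x => x % 2 = 1))) := by
      ext ⟨l, m⟩
      simp only [hP, Finset.mem_filter, Finset.mem_product, Finset.mem_union, Finset.mem_Icc]
      omega
    have hdisj : Disjoint (((Finset.Icc 1 (j-1)).filter (fun x => x % 2 = 0)) ×ˢ
          ((Finset.Icc 1 (i-1)).filter (fun x => x % 2 = 0)))
        (((Finset.Icc 1 (j-1)).filter (fun x => x % 2 = 1)) ×ˢ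
          ((Finset.Icc 1 (i-1)).filter (fun x => x % 2 = 1))) := by
      rw [Finset.disjoint_left]
      rintro ⟨l, m⟩ h h'
      simp only [Finset.mem_filter, Finset.mem_product] at h h'
      omega
    rw [hunion, Finset.card_union_of_disjoint hdisj, Finset.card_product, Finset.card_product,
      card_parity 0 (by norm_num) (j-1), card_parity 0 (by norm_num) (i-1),
      card_parity 1 (by norm_num) (j-1), card_parity 1 (by norm_num) (i-1)]
    exact count_arith i j hi hj hparity
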